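/- Suppose 𝒜 = {0, 1, …, p} ∪ {q₁, …, q_l} ∪ {α}, where 1 ≤ p < q₁ < ⋯ < q_l ≤ α and p ≥ α − q₁. Then 𝒜 has property (P₂). -/

import Mathlib

open scoped Pointwise

/-- The `m`-fold sumset of a finite set `A ⊆ ℕ`, with `0 • A = {0}`. -/
def sumset (A : Finset ℕ) : ℕ → Finset ℕ
  | 0 => {0}
  | m + 1 => sumset A m + A

/-- A subset of `ℕ` is full iff it equals `{0, 1, …, n}` for some `n`. -/
def IsFull (B : Finset ℕ) : Prop := ∃ n : ℕ, B = Finset.Iic n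

/-- `{i, …, j}` is a gap of `B`: disjoint from `B`, with `i - 1 ∈ B` and `j + 1 ∈ B`. -/
def IsGap (B : Finset ℕ) (i j : ℕ) : Prop :=
  1 ≤ i ∧ i ≤ j ∧ (∀ k, i ≤ k → k ≤ j → k ∉ B) ∧ i - 1 ∈ B ∧ j + 1 ∈ B

/-- `λ(B)`: the maximal length of a gap of `B` (`0` if there are no gaps). -/
noncomputable def gapLen (B : Finset ℕ) : ℕ :=
  sSup {n | ∃ i j, IsGap B i j ∧ n = j - i + 1}

/-- Property `(P₁)`. -/
def P1 (A : Finset ℕ) (α : ℕ) : Prop :=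
  ∀ m : ℕ, ¬ IsFull (sumset A m) → ¬ IsFull (sumset A m + ({0, α} : Finset ℕ))

/-- Property `(P₂)`. -/
def P2 (A : Finset ℕ) (α : ℕ) : Prop :=
  ∀ m : ℕ, ¬ IsFull (sumset A m) →
    ¬ ((∀ k, k ≤ α → k ∈ sumset A m) ∧
       (∀ k, (m - 1) * α ≤ k → k ≤ m * α → k ∈ sumset A m))

/-- The combinatorial reduction number `r(𝒜)`. -/
noncomputable def rA (A : Finset ℕ) (α : ℕ) : ℕ :=
  sInf {r : ℕ | sumset A (r + 1) = ({0, α} : Finset ℕ) + sumset A r}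

/-- The combinatorial regularity `reg(𝒜)`. -/
noncomputable def regA (A : Finset ℕ) : ℕ :=
  sInf {m : ℕ | 1 ≤ m ∧ IsFull (sumset A m)}

lemma mem_sumset_add {A : Finset ℕ} {a b x y : ℕ} (hx : x ∈ sumset A a)
    (hy : y ∈ sumset A b) : x + y ∈ sumset A (a + b) := by
  induction b generalizing y with
  | zero =>
    simp only [sumset, Finset.mem_singleton] at hy
    subst hy; simpa using hx
  | succ b ih =>
    rw [sumset] at hy
    obtain ⟨y1, hy1, c, hc, rfl⟩ := Finset.mem_add.mp hy
    have h := Finset.add_mem_add (ih hy1) hc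
    show x + (y1 + c) ∈ sumset A ((a + b) + 1)
    rw [sumset]
    simpa [add_assoc] using h

lemma const_mem {A : Finset ℕ} {a : ℕ} (h : a ∈ A) : ∀ k, k * a ∈ sumset A k
  | 0 => by simp [sumset]
  | k + 1 => by
    rw [sumset]
    have := Finset.add_mem_add (const_mem h k) h
    simpa [Nat.succ_mul] using this

lemma small_mem {A : Finset ℕ} {p : ℕ} (hp : Finset.Iic p ⊆ A) :
    ∀ t s, s ≤ t * p → s ∈ sumset A t
  | 0, s, hs => by
    have : s = 0 := by simpa using hs
    subst this; simp [sumset]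
  | t + 1, s, hs => by
    rcases le_or_gt s p with h | h
    · have h0 : (0 : ℕ) ∈ sumset A t := small_mem hp t 0 (Nat.zero_le _)
      have hsA : s ∈ A := hp (Finset.mem_Iic.mpr h)
      rw [sumset]
      simpa using Finset.add_mem_add h0 hsA
    · have hple : p ≤ s := h.le
      have hs' : s ≤ t * p + p := by rwa [Nat.succ_mul] at hs
      have h1 : s - p ≤ t * p := Nat.sub_le_of_le_add hs'
      have := Finset.add_mem_add (small_mem hp t (s - p) h1)
        (hp (Finset.mem_Iic.mpr (le_refl p)))
      rw [sumset]
      simpa [Nat.sub_add_cancel hple] using this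

lemma sum_le {A : Finset ℕ} {α : ℕ} (hA : ∀ a ∈ A, a ≤ α) :
    ∀ m x, x ∈ sumset A m → x ≤ m * α
  | 0, x, hx => by
    simp only [sumset, Finset.mem_singleton] at hx; simp [hx]
  | m + 1, x, hx => by
    rw [sumset] at hx
    obtain ⟨y, hy, c, hc, rfl⟩ := Finset.mem_add.mp hx
    have h1 := sum_le hA m y hy
    have h2 := hA c hc
    calc y + c ≤ m * α + α := Nat.add_le_add h1 h2
      _ = (m + 1) * α := (Nat.succ_mul m α).symm

lemma cap_bound {A : Finset ℕ} {p B : ℕ} (h : ∀ a ∈ A, a ≤ B → a ≤ p) :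
    ∀ m x, x ∈ sumset A m → x ≤ B → x ≤ m * p
  | 0, x, hx, _ => by
    simp only [sumset, Finset.mem_singleton] at hx; simp [hx]
  | m + 1, x, hx, hxB => by
    rw [sumset] at hx
    obtain ⟨y, hy, c, hc, rfl⟩ := Finset.mem_add.mp hx
    have h1 := cap_bound h m y hy (le_trans (Nat.le_add_right y c) hxB)
    have h2 := h c hc (le_trans (Nat.le_add_left c y) hxB)
    calc y + c ≤ m * p + p := Nat.add_le_add h1 h2
      _ = (m + 1) * p := (Nat.succ_mul m p).symm

lemma defic_bound {A : Finset ℕ} {α d E : ℕ} (hA : ∀ a ∈ A, a ≤ α)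
    (h : ∀ a ∈ A, α < a + E → α ≤ a + d) :
    ∀ m x, x ∈ sumset A m → m * α < x + E → m * α ≤ x + m * d
  | 0, x, _, _ => by simp
  | m + 1, x, hx, hE => by
    rw [sumset] at hx
    obtain ⟨y, hy, c, hc, rfl⟩ := Finset.mem_add.mp hx
    have hyle := sum_le hA m y hy
    have hcle := hA c hc
    have e1 : (m + 1) * α = m * α + α := Nat.succ_mul m α
    have e2 : (m + 1) * d = m * d + d := Nat.succ_mul m d
    rw [e1] at hE
    have hy' : m * α < y + E := by linarith
    have hc' : α < c + E := by linarith
    have ih := defic_bound hA h m y hy hy'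
    have hcd := h c hc hc'
    rw [e1, e2]; linarith

lemma find_t : ∀ (k A d : ℕ), 1 ≤ A → A ≤ k * d →
    ∃ t, t ≤ k ∧ A ≤ t * d ∧ t * d < A + d
  | 0, A, d, hA, hk => by simp at hk; omega
  | k + 1, A, d, hA, hk => by
    rcases le_or_gt A (k * d) with h | h
    · obtain ⟨t, ht, h1, h2⟩ := find_t k A d hA h
      exact ⟨t, le_trans ht (Nat.le_succ k), h1, h2⟩
    · refine ⟨k + 1, le_refl _, hk, ?_⟩
      have : (k + 1) * d = k * d + d := Nat.succ_mul k d
      linarith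

/-- If `𝒜 = {0,…,p} ∪ {q₁,…,q_l} ∪ {α}` with `1 ≤ p < q₁ < ⋯ < q_l ≤ α` and `p ≥ α − q₁`,
then `𝒜` has property `(P₂)`. -/
theorem stmt_14 (𝒜 Q : Finset ℕ) (p α : ℕ) (hQne : Q.Nonempty)
    (h𝒜 : 𝒜 = Finset.Iic p ∪ Q ∪ {α})
    (hp : 1 ≤ p)
    (hQ : ∀ q ∈ Q, p < q ∧ q ≤ α)
    (hpq : α - Q.min' hQne ≤ p) :
    P2 𝒜 α := by
  intro m hnf
  rintro ⟨H1, H2⟩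
  apply hnf
  set q₁ := Q.min' hQne with hq₁def
  have hq₁Q : q₁ ∈ Q := Q.min'_mem hQne
  obtain ⟨hpq₁, hq₁α⟩ := hQ q₁ hq₁Q
  have hmemA : ∀ a, a ∈ 𝒜 ↔ (a ≤ p ∨ a ∈ Q ∨ a = α) := by
    intro a
    simp [h𝒜, Finset.mem_union, Finset.mem_Iic, Finset.mem_singleton]
    tauto
  have hIicSub : Finset.Iic p ⊆ 𝒜 := by
    intro a ha
    exact (hmemA a).mpr (Or.inl (Finset.mem_Iic.mp ha))
  have hq₁A : q₁ ∈ 𝒜 := (hmemA _).mpr (Or.inr (Or.inl hq₁Q))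
  have hαA : α ∈ 𝒜 := (hmemA _).mpr (Or.inr (Or.inr rfl))
  have hmin : ∀ q ∈ Q, q₁ ≤ q := fun q hq => Q.min'_le q hq
  have hAle : ∀ a ∈ 𝒜, a ≤ α := by
    intro a ha
    rcases (hmemA a).mp ha with h | h | h
    · omega
    · exact (hQ a h).2
    · omega
  rcases Nat.eq_zero_or_pos m with rfl | hm
  · exact ⟨0, by ext y; simp [sumset, Nat.le_zero]⟩
  obtain ⟨n, rfl⟩ : ∃ n, m = n + 1 := ⟨m - 1, by omega⟩
  simp only [Nat.add_sub_cancel] at H2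
  obtain ⟨d, hd⟩ : ∃ d, q₁ + d = α := ⟨α - q₁, by omega⟩
  have hdp : d ≤ p := by omega
  obtain ⟨E, hE⟩ : ∃ E, p + E = α := ⟨α - p, by omega⟩
  -- L1 : q₁ ≤ (n+1) * p + 1
  have hL1 : q₁ ≤ (n + 1) * p + 1 := by
    have h1 : q₁ - 1 ∈ sumset 𝒜 (n + 1) := H1 (q₁ - 1) (by omega)
    have hcap : ∀ a ∈ 𝒜, a ≤ q₁ - 1 → a ≤ p := by
      intro a ha haB
      rcases (hmemA a).mp ha with h | h | h
      · exact h
      · have := hmin a h; omega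
      · omega
    have h2 : q₁ - 1 ≤ (n + 1) * p := cap_bound hcap (n + 1) _ h1 (le_refl _)
    exact Nat.le_add_of_sub_le h2
  -- L2 : α ≤ p + 1 + (n+1) * d
  have hL2 : α ≤ p + 1 + (n + 1) * d := by
    have e1 : (n + 1) * α = n * α + α := Nat.succ_mul n α
    have hxm : n * α + (p + 1) ∈ sumset 𝒜 (n + 1) := by
      refine H2 _ (Nat.le_add_right _ _) ?_
      rw [e1]; omega
    have hcond : ∀ a ∈ 𝒜, α < a + E → α ≤ a + d := by
      intro a ha hlt
      rcases (hmemA a).mp ha with h | h | h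
      · omega
      · have := hmin a h; omega
      · omega
    have hlt : (n + 1) * α < (n * α + (p + 1)) + E := by rw [e1]; omega
    have := defic_bound hAle hcond (n + 1) _ hxm hlt
    rw [e1] at this
    linarith
  -- conclude fullness
  refine ⟨(n + 1) * α, ?_⟩
  ext x
  simp only [Finset.mem_Iic]
  constructor
  · exact fun hx => sum_le hAle (n + 1) x hx
  · intro hxle
    by_cases hx1 : n * α ≤ x
    · exact H2 x hx1 hxle
    push_neg at hx1
    have hα0 : 0 < α := by omega
    obtain ⟨k, r, hkr, hrα⟩ : ∃ k r, α * k + r = x ∧ r < α :=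
      ⟨x / α, x % α, Nat.div_add_mod x α, Nat.mod_lt x hα0⟩
    have hkn : k < n := by
      by_contra hc
      push_neg at hc
      have : n * α ≤ k * α := Nat.mul_le_mul_right α hc
      have : α * k = k * α := mul_comm _ _
      omega
    obtain ⟨j, hj1, hjm⟩ : ∃ j, 1 ≤ j ∧ n + 1 = k + j + 1 := ⟨n - k, by omega⟩
    by_cases hcase : r ≤ (j + 1) * p
    · have h1 : α * k ∈ sumset 𝒜 k := by rw [mul_comm]; exact const_mem hαA k
      have h2 : r ∈ sumset 𝒜 (j + 1) := small_mem hIicSub (j + 1) r hcase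
      have h3 := mem_sumset_add h1 h2
      rw [show k + (j + 1) = n + 1 by omega] at h3
      rwa [hkr] at h3
    push_neg at hcase
    by_cases hq : q₁ ≤ r
    · -- use one copy of q₁
      have hrq : r - q₁ ≤ j * p := by
        have h5 : r - q₁ ≤ p := by omega
        calc r - q₁ ≤ p := h5
          _ = 1 * p := (one_mul p).symm
          _ ≤ j * p := Nat.mul_le_mul_right p hj1
      have h1 : α * k ∈ sumset 𝒜 k := by rw [mul_comm]; exact const_mem hαA k
      have h2 : q₁ ∈ sumset 𝒜 1 := by simpa using const_mem hq₁A 1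
      have h3 : r - q₁ ∈ sumset 𝒜 j := small_mem hIicSub j _ hrq
      have h4 := mem_sumset_add (mem_sumset_add h1 h2) h3
      rw [show k + 1 + j = n + 1 by omega] at h4
      have heq : α * k + q₁ + (r - q₁) = x := by omega
      rwa [heq] at h4
    push_neg at hq
    -- r < q₁, (j+1)*p < r : use t+1 copies of q₁ and k - t copies of α
    have hd1 : 1 ≤ d := by
      by_contra hd0
      push_neg at hd0
      have hd0' : d = 0 := by omega
      have hz : (n + 1) * d = 0 := by rw [hd0']; ring
      have hrp : r ≤ p := by omega
      have hjp : p ≤ (j + 1) * p := by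
        calc p = 1 * p := (one_mul p).symm
          _ ≤ (j + 1) * p := Nat.mul_le_mul_right p (by omega)
      linarith
    have hq₁kd : q₁ ≤ r + k * d := by
      have e1 : (n + 1) * d = k * d + j * d + d := by rw [hjm]; ring
      have e2 : (j + 1) * p = j * p + p := by ring
      have e3 : j * d ≤ j * p := Nat.mul_le_mul_left j hdp
      linarith
    obtain ⟨t, htk, ht1, ht2⟩ := find_t k (q₁ - r) d (by omega)
      (by rw [Nat.sub_le_iff_le_add]; linarith)
    obtain ⟨T, hT⟩ : ∃ T, t * d = T := ⟨_, rfl⟩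
    rw [hT] at ht1 ht2
    obtain ⟨s, hs⟩ : ∃ s, r + T = q₁ + s := ⟨r + T - q₁, by omega⟩
    have hsd : s < d := by omega
    have hsle : s ≤ j * p := by
      have hjp : p ≤ j * p := by
        calc p = 1 * p := (one_mul p).symm
          _ ≤ j * p := Nat.mul_le_mul_right p hj1
      omega
    obtain ⟨i, hik⟩ : ∃ i, k = t + i := ⟨k - t, by omega⟩
    have h1 : α * i ∈ sumset 𝒜 i := by rw [mul_comm]; exact const_mem hαA i
    have h2 : (t + 1) * q₁ ∈ sumset 𝒜 (t + 1) := const_mem hq₁A (t + 1)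
    have h3 : s ∈ sumset 𝒜 j := small_mem hIicSub j s hsle
    have h4 := mem_sumset_add (mem_sumset_add h1 h2) h3
    rw [show i + (t + 1) + j = n + 1 by omega] at h4
    have heq : α * i + (t + 1) * q₁ + s = x := by
      have e1 : α * i + α * t = α * k := by rw [hik]; ring
      have e2 : α * t = q₁ * t + d * t := by rw [← hd]; ring
      have e3 : (t + 1) * q₁ = q₁ * t + q₁ := by ring
      have e4 : d * t = T := by rw [← hT]; ring
      linarith
    rwa [heq] at h4
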